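/- Let x_1,...,x_N ∈ St(d,r), x̂ = (1/N)∑ x_i, and x̄ the induced arithmetic mean. If D² := ∑_i ‖x_i − x̄‖_F² ≤ N/2, then ∑_i ‖x_i − x̂‖_F² ≥ D² − (4r/N) D⁴. -/

import Mathlib

open Matrix BigOperators Finset

noncomputable def fnorm {d r : ℕ} (A : Matrix (Fin d) (Fin r) ℝ) : ℝ :=
  Real.sqrt (∑ i, ∑ j, (A i j) ^ 2)

def ip {d r : ℕ} (A B : Matrix (Fin d) (Fin r) ℝ) : ℝ :=
  ∑ i, ∑ j, A i j * B i j

def Stiefel (d r : ℕ) : Set (Matrix (Fin d) (Fin r) ℝ) :=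
  {x | xᵀ * x = 1}

section Aux

lemma trig_aux (a b : ℝ) (h : ∀ θ : ℝ, a * Real.cos θ + b * Real.sin θ ≤ a) : b = 0 := by
  by_contra hb
  set z : ℂ := ⟨a, b⟩ with hz
  have hz0 : z ≠ 0 := by
    intro h0
    exact hb (by simpa [hz] using congrArg Complex.im h0)
  have hc := Complex.cos_arg hz0
  have hs := Complex.sin_arg z
  have key := h (Complex.arg z)
  rw [hc, hs] at key
  have habs : (0:ℝ) < ‖z‖ := norm_pos_iff.mpr hz0
  have heq : a * (z.re / ‖z‖) + b * (z.im / ‖z‖) = ‖z‖ := by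
    rw [show z.re = a from rfl, show z.im = b from rfl]
    field_simp
    rw [Complex.sq_norm]
    simp [Complex.normSq_apply, hz]
    ring
  rw [heq] at key
  have h2 : ‖z‖ ^ 2 ≤ a ^ 2 := by nlinarith
  rw [Complex.sq_norm] at h2
  simp [Complex.normSq_apply, hz] at h2
  nlinarith [mul_self_pos.mpr hb]

lemma gram_eq {d r : ℕ} {xbar : Matrix (Fin d) (Fin r) ℝ} (hmem : xbar ∈ Stiefel d r)
    (a b : Fin r) : ∑ i, xbar i a * xbar i b = if a = b then (1:ℝ) else 0 := by
  have := congrFun (congrFun hmem a) b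
  simpa [Matrix.mul_apply, Matrix.transpose_apply, Matrix.one_apply] using this

lemma rotate_one_col {d r : ℕ} {xbar : Matrix (Fin d) (Fin r) ℝ} (hmem : xbar ∈ Stiefel d r)
    (w : Fin d → ℝ) (hw1 : ∑ i, w i * w i = 1) (hworth : ∀ a, ∑ i, xbar i a * w i = 0)
    (j : Fin r) (θ : ℝ) :
    (fun i l => if l = j then Real.cos θ * xbar i j + Real.sin θ * w i else xbar i l :
      Matrix (Fin d) (Fin r) ℝ) ∈ Stiefel d r := by
  set c := Real.cos θ
  set s := Real.sin θ
  have hcs : c^2 + s^2 = 1 := by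
    rw [add_comm]; exact Real.sin_sq_add_cos_sq θ
  have hG := gram_eq hmem
  show _ = _
  ext a b
  erw [Matrix.mul_apply]; simp only [Matrix.transpose, Matrix.of_apply, Matrix.one_apply]
  by_cases ha : a = j <;> by_cases hb : b = j
  · rw [ha, hb]
    simp only [if_pos rfl, ite_true]
    have : ∀ i : Fin d, (c * xbar i j + s * w i) * (c * xbar i j + s * w i)
        = c*c*(xbar i j * xbar i j) + (c*s)*(xbar i j * w i) + (c*s)*(xbar i j * w i) + s*s*(w i * w i) := by
      intro i; ring
    rw [Finset.sum_congr rfl (fun i _ => this i)]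
    simp only [Finset.sum_add_distrib, ← Finset.mul_sum]
    rw [hG j j, hworth j, hw1]
    simp only [if_pos rfl, ite_true]
    nlinarith [hcs]
  · rw [ha]
    simp only [if_pos rfl, ite_true, if_neg hb]
    have : ∀ i : Fin d, (c * xbar i j + s * w i) * xbar i b
        = c*(xbar i j * xbar i b) + s*(xbar i b * w i) := by intro i; ring
    rw [Finset.sum_congr rfl (fun i _ => this i)]
    simp only [Finset.sum_add_distrib, ← Finset.mul_sum]
    rw [hG j b, hworth b]
    have : ¬ (j = b) := fun h => hb h.symm
    simp [this]
  · rw [hb]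
    simp only [if_pos rfl, ite_true, if_neg ha]
    have : ∀ i : Fin d, xbar i a * (c * xbar i j + s * w i)
        = c*(xbar i a * xbar i j) + s*(xbar i a * w i) := by intro i; ring
    rw [Finset.sum_congr rfl (fun i _ => this i)]
    simp only [Finset.sum_add_distrib, ← Finset.mul_sum]
    rw [hG a j, hworth a]
    simp [ha]
  · simp only [if_neg ha, if_neg hb]
    exact hG a b

lemma rotate_two_col {d r : ℕ} {xbar : Matrix (Fin d) (Fin r) ℝ} (hmem : xbar ∈ Stiefel d r)
    {j k : Fin r} (hjk : j ≠ k) (θ : ℝ) :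
    (fun i l => if l = j then Real.cos θ * xbar i j + Real.sin θ * xbar i k
      else if l = k then -Real.sin θ * xbar i j + Real.cos θ * xbar i k
      else xbar i l : Matrix (Fin d) (Fin r) ℝ) ∈ Stiefel d r := by
  set c := Real.cos θ with hc
  set s := Real.sin θ with hs
  have hcs : c^2 + s^2 = 1 := by
    rw [add_comm]; exact Real.sin_sq_add_cos_sq θ
  have hG := gram_eq hmem
  show _ = _
  ext a b
  erw [Matrix.mul_apply]; simp only [Matrix.transpose, Matrix.of_apply, Matrix.one_apply]
  have expand : ∀ (p q u v : ℝ), ∑ i, (p * xbar i j + q * xbar i k) * (u * xbar i j + v * xbar i k)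
      = p*u + q*v := by
    intro p q u v
    have h1 : ∀ i : Fin d, (p * xbar i j + q * xbar i k) * (u * xbar i j + v * xbar i k)
        = (p*u)*(xbar i j * xbar i j) + (p*v)*(xbar i j * xbar i k)
          + (q*u)*(xbar i k * xbar i j) + (q*v)*(xbar i k * xbar i k) := fun i => by ring
    rw [Finset.sum_congr rfl (fun i _ => h1 i)]
    simp only [Finset.sum_add_distrib, ← Finset.mul_sum]
    rw [hG j j, hG j k, hG k j, hG k k]
    simp [hjk, hjk.symm, Ne.symm hjk]
  have expand2 : ∀ (p q : ℝ) (b : Fin r), b ≠ j → b ≠ k →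
      ∑ i, (p * xbar i j + q * xbar i k) * xbar i b = 0 := by
    intro p q b hbj hbk
    have h1 : ∀ i : Fin d, (p * xbar i j + q * xbar i k) * xbar i b
        = p*(xbar i j * xbar i b) + q*(xbar i k * xbar i b) := fun i => by ring
    rw [Finset.sum_congr rfl (fun i _ => h1 i)]
    simp only [Finset.sum_add_distrib, ← Finset.mul_sum]
    rw [hG j b, hG k b]
    rw [if_neg (Ne.symm hbj), if_neg (Ne.symm hbk)]; ring
  by_cases ha : a = j <;> by_cases hb : b = j
  · rw [ha, hb]; simp only [if_pos rfl, ite_true]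
    rw [expand c s c s]; nlinarith
  · rw [ha]; simp only [if_pos rfl, ite_true, if_neg hb]
    by_cases hbk : b = k
    · rw [hbk]; simp only [if_pos rfl, ite_true]
      rw [expand c s (-s) c, if_neg hjk]; ring
    · simp only [if_neg hbk]
      rw [expand2 c s b hb hbk, if_neg (Ne.symm hb)]
  · rw [hb]; simp only [if_pos rfl, ite_true, if_neg ha]
    by_cases hak : a = k
    · rw [hak]; simp only [if_pos rfl, ite_true]
      have h1 : ∀ i : Fin d, (-s * xbar i j + c * xbar i k) * (c * xbar i j + s * xbar i k)
          = (c * xbar i j + s * xbar i k) * (-s * xbar i j + c * xbar i k) := fun i => by ring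
      rw [Finset.sum_congr rfl (fun i _ => h1 i), expand c s (-s) c]; ring
    · simp only [if_neg hak]
      have h1 : ∀ i : Fin d, xbar i a * (c * xbar i j + s * xbar i k)
          = (c * xbar i j + s * xbar i k) * xbar i a := fun i => by ring
      rw [Finset.sum_congr rfl (fun i _ => h1 i), expand2 c s a ha hak]
  · simp only [if_neg ha, if_neg hb]
    by_cases hak : a = k <;> by_cases hbk : b = k
    · rw [hak, hbk]; simp only [if_pos rfl, ite_true]
      rw [expand (-s) c (-s) c]; nlinarith
    · rw [hak]; simp only [if_pos rfl, ite_true, if_neg hbk]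
      rw [expand2 (-s) c b hb hbk, if_neg (Ne.symm hbk)]
    · rw [hbk]; simp only [if_pos rfl, ite_true, if_neg hak]
      have h1 : ∀ i : Fin d, xbar i a * (-s * xbar i j + c * xbar i k)
          = (-s * xbar i j + c * xbar i k) * xbar i a := fun i => by ring
      rw [Finset.sum_congr rfl (fun i _ => h1 i), expand2 (-s) c a ha hak]
    · simp only [if_neg hak, if_neg hbk]
      exact hG a b

lemma ip_col_diff {d r : ℕ} (xbar S : Matrix (Fin d) (Fin r) ℝ) (j : Fin r)
    (v : Fin d → ℝ) :
    ip (fun i l => if l = j then v i else xbar i l) S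
      = ip xbar S + ∑ i, (v i - xbar i j) * S i j := by
  unfold ip
  rw [← Finset.sum_add_distrib]
  apply Finset.sum_congr rfl
  intro i _
  have h1 : ∀ l : Fin r, (if l = j then v i else xbar i l) * S i l
      = xbar i l * S i l + (if l = j then (v i - xbar i j) * S i j else 0) := by
    intro l
    by_cases hl : l = j
    · rw [if_pos hl, if_pos hl, hl]; ring
    · rw [if_neg hl, if_neg hl]; ring
  rw [Finset.sum_congr rfl (fun l _ => h1 l), Finset.sum_add_distrib,
    Finset.sum_ite_eq' univ j (fun _ => (v i - xbar i j) * S i j)]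
  simp

lemma key_colspace {d r : ℕ} {xbar S : Matrix (Fin d) (Fin r) ℝ} (hmem : xbar ∈ Stiefel d r)
    (hmax : ∀ y ∈ Stiefel d r, ip y S ≤ ip xbar S) (i0 : Fin d) (j : Fin r) :
    S i0 j = ∑ k, xbar i0 k * (∑ i, xbar i k * S i j) := by
  set M : Fin r → Fin r → ℝ := fun a b => ∑ i, xbar i a * S i b with hM
  set w : Fin d → ℝ := fun i => S i j - ∑ k, xbar i k * M k j with hw
  have hG := gram_eq hmem
  have horth : ∀ a, ∑ i, xbar i a * w i = 0 := by
    intro a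
    have h2 : ∑ i, xbar i a * (∑ k, xbar i k * M k j) = M a j := by
      have : ∀ i, xbar i a * (∑ k, xbar i k * M k j) = ∑ k, M k j * (xbar i a * xbar i k) := by
        intro i
        rw [Finset.mul_sum]
        exact Finset.sum_congr rfl (fun k _ => by ring)
      rw [Finset.sum_congr rfl (fun i _ => this i), Finset.sum_comm]
      have : ∀ k, ∑ i, M k j * (xbar i a * xbar i k) = M k j * (if a = k then 1 else 0) := by
        intro k
        rw [← Finset.mul_sum, hG a k]
      rw [Finset.sum_congr rfl (fun k _ => this k)]
      simp [Finset.sum_ite_eq]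
    have : ∀ i, xbar i a * w i = xbar i a * S i j - xbar i a * (∑ k, xbar i k * M k j) := by
      intro i; rw [hw]; ring
    rw [Finset.sum_congr rfl (fun i _ => this i), Finset.sum_sub_distrib, h2]
    simp [hM]
  have hwS : ∑ i, w i * S i j = ∑ i, w i * w i := by
    have : ∀ i, w i * S i j = w i * w i + ∑ k, M k j * (xbar i k * w i) := by
      intro i
      have : S i j = w i + ∑ k, xbar i k * M k j := by rw [hw]; ring
      rw [this, mul_add]
      congr 1
      rw [Finset.mul_sum]
      exact Finset.sum_congr rfl (fun k _ => by ring)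
    rw [Finset.sum_congr rfl (fun i _ => this i), Finset.sum_add_distrib, Finset.sum_comm]
    have : ∀ k, ∑ i, M k j * (xbar i k * w i) = 0 := by
      intro k; rw [← Finset.mul_sum, horth k, mul_zero]
    rw [Finset.sum_congr rfl (fun k _ => this k)]
    simp
  have hww : ∑ i, w i * w i = 0 := by
    by_contra hne
    have hpos : 0 < ∑ i, w i * w i := by
      rcases lt_or_eq_of_le (Finset.sum_nonneg (fun i _ => mul_self_nonneg (w i))) with h | h
      · exact h
      · exact absurd h.symm hne
    set ρ : ℝ := Real.sqrt (∑ i, w i * w i) with hρ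
    have hρpos : 0 < ρ := Real.sqrt_pos.mpr hpos
    have hρsq : ρ * ρ = ∑ i, w i * w i := Real.mul_self_sqrt (le_of_lt hpos)
    set u : Fin d → ℝ := fun i => w i / ρ with hu
    have hu1 : ∑ i, u i * u i = 1 := by
      have : ∀ i, u i * u i = (w i * w i) / (ρ * ρ) := by
        intro i; rw [hu]; ring
      rw [Finset.sum_congr rfl (fun i _ => this i), ← Finset.sum_div, ← hρsq]
      field_simp
    have huorth : ∀ a, ∑ i, xbar i a * u i = 0 := by
      intro a
      have : ∀ i, xbar i a * u i = (xbar i a * w i) / ρ := by intro i; rw [hu]; ring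
      rw [Finset.sum_congr rfl (fun i _ => this i), ← Finset.sum_div, horth a]
      simp
    have key : ∀ θ : ℝ, M j j * Real.cos θ + ρ * Real.sin θ ≤ M j j := by
      intro θ
      have hmem' := rotate_one_col hmem u hu1 huorth j θ
      have hle := hmax _ hmem'
      rw [ip_col_diff xbar S j (fun i => Real.cos θ * xbar i j + Real.sin θ * u i)] at hle
      have hexp : ∑ i, (Real.cos θ * xbar i j + Real.sin θ * u i - xbar i j) * S i j
          = (Real.cos θ - 1) * M j j + Real.sin θ * ρ := by
        have : ∀ i, (Real.cos θ * xbar i j + Real.sin θ * u i - xbar i j) * S i j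
            = (Real.cos θ - 1) * (xbar i j * S i j) + (Real.sin θ / ρ) * (w i * S i j) := by
          intro i; rw [hu]; field_simp; ring
        rw [Finset.sum_congr rfl (fun i _ => this i), Finset.sum_add_distrib,
          ← Finset.mul_sum, ← Finset.mul_sum, hwS, ← hρsq]
        rw [hM]
        field_simp
      rw [hexp] at hle
      linarith
    have := trig_aux (M j j) ρ key
    exact absurd this (ne_of_gt hρpos)
  have : w i0 = 0 := by
    have h := (Finset.sum_eq_zero_iff_of_nonneg (fun i _ => mul_self_nonneg (w i))).mp hww i0 (Finset.mem_univ i0)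
    exact mul_self_eq_zero.mp h
  have := sub_eq_zero.mp (by rw [hw] at this; exact this)
  rw [this]

lemma ip_two_col_diff {d r : ℕ} (xbar S : Matrix (Fin d) (Fin r) ℝ) {j k : Fin r}
    (hjk : j ≠ k) (v1 v2 : Fin d → ℝ) :
    ip (fun i l => if l = j then v1 i else if l = k then v2 i else xbar i l) S
      = ip xbar S + ∑ i, (v1 i - xbar i j) * S i j + ∑ i, (v2 i - xbar i k) * S i k := by
  unfold ip
  rw [← Finset.sum_add_distrib, ← Finset.sum_add_distrib]
  apply Finset.sum_congr rfl
  intro i _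
  have h1 : ∀ l : Fin r, (if l = j then v1 i else if l = k then v2 i else xbar i l) * S i l
      = xbar i l * S i l + (if l = j then (v1 i - xbar i j) * S i j else 0)
        + (if l = k then (v2 i - xbar i k) * S i k else 0) := by
    intro l
    by_cases hlj : l = j
    · rw [if_pos hlj, if_pos hlj, if_neg (hlj ▸ hjk), hlj]; ring
    · rw [if_neg hlj, if_neg hlj]
      by_cases hlk : l = k
      · rw [if_pos hlk, if_pos hlk, hlk]; ring
      · rw [if_neg hlk, if_neg hlk]; ring
  rw [Finset.sum_congr rfl (fun l _ => h1 l), Finset.sum_add_distrib, Finset.sum_add_distrib,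
    Finset.sum_ite_eq' univ j (fun _ => (v1 i - xbar i j) * S i j),
    Finset.sum_ite_eq' univ k (fun _ => (v2 i - xbar i k) * S i k)]
  simp

lemma key_sym {d r : ℕ} {xbar S : Matrix (Fin d) (Fin r) ℝ} (hmem : xbar ∈ Stiefel d r)
    (hmax : ∀ y ∈ Stiefel d r, ip y S ≤ ip xbar S) (j k : Fin r) :
    ∑ i, xbar i j * S i k = ∑ i, xbar i k * S i j := by
  by_cases hjk : j = k
  · rw [hjk]
  · set M : Fin r → Fin r → ℝ := fun a b => ∑ i, xbar i a * S i b with hM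
    have key : ∀ θ : ℝ, (M j j + M k k) * Real.cos θ + (M k j - M j k) * Real.sin θ
        ≤ M j j + M k k := by
      intro θ
      set c := Real.cos θ
      set s := Real.sin θ
      have hmem' := rotate_two_col hmem hjk θ
      have hle := hmax _ hmem'
      rw [ip_two_col_diff xbar S hjk (fun i => c * xbar i j + s * xbar i k)
        (fun i => -s * xbar i j + c * xbar i k)] at hle
      have e1 : ∑ i, (c * xbar i j + s * xbar i k - xbar i j) * S i j
          = (c - 1) * M j j + s * M k j := by
        have : ∀ i : Fin d, (c * xbar i j + s * xbar i k - xbar i j) * S i j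
            = (c - 1) * (xbar i j * S i j) + s * (xbar i k * S i j) := fun i => by ring
        rw [Finset.sum_congr rfl (fun i _ => this i), Finset.sum_add_distrib,
          ← Finset.mul_sum, ← Finset.mul_sum]
      have e2 : ∑ i, (-s * xbar i j + c * xbar i k - xbar i k) * S i k
          = (c - 1) * M k k - s * M j k := by
        have : ∀ i : Fin d, (-s * xbar i j + c * xbar i k - xbar i k) * S i k
            = (c - 1) * (xbar i k * S i k) - s * (xbar i j * S i k) := fun i => by ring
        rw [Finset.sum_congr rfl (fun i _ => this i), Finset.sum_sub_distrib,
          ← Finset.mul_sum, ← Finset.mul_sum]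
      rw [e1, e2] at hle
      nlinarith [hle]
    have := trig_aux (M j j + M k k) (M k j - M j k) key
    have h2 : M k j = M j k := by linarith
    exact h2.symm

lemma sum_two_point {r : ℕ} {a b : Fin r} (hab : a ≠ b) (f : Fin r → ℝ) (s u : ℝ) :
    ∑ p, (if p = a then s else if p = b then u else 0) * f p = s * f a + u * f b := by
  have h1 : ∀ p : Fin r, (if p = a then s else if p = b then u else 0) * f p
      = (if p = a then s * f a else 0) + (if p = b then u * f b else 0) := by
    intro p
    by_cases hpa : p = a
    · rw [if_pos hpa, if_pos hpa, if_neg (hpa ▸ hab), hpa]; ring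
    · rw [if_neg hpa, if_neg hpa]
      by_cases hpb : p = b
      · rw [if_pos hpb, if_pos hpb, hpb]; ring
      · rw [if_neg hpb, if_neg hpb]; ring
  rw [Finset.sum_congr rfl (fun p _ => h1 p), Finset.sum_add_distrib,
    Finset.sum_ite_eq' univ a (fun _ => s * f a), Finset.sum_ite_eq' univ b (fun _ => u * f b)]
  simp

lemma fnorm_sq {d r : ℕ} (A : Matrix (Fin d) (Fin r) ℝ) : fnorm A ^ 2 = ip A A := by
  unfold fnorm ip
  rw [Real.sq_sqrt (by positivity)]
  exact Finset.sum_congr rfl (fun i _ => Finset.sum_congr rfl (fun j _ => by rw [pow_two]))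

lemma ip_symm {d r : ℕ} (A B : Matrix (Fin d) (Fin r) ℝ) : ip A B = ip B A := by
  unfold ip
  exact Finset.sum_congr rfl (fun i _ => Finset.sum_congr rfl (fun j _ => mul_comm _ _))

lemma ip_sub_expand {d r : ℕ} (A B : Matrix (Fin d) (Fin r) ℝ) :
    ip (A - B) (A - B) = ip A A - 2 * ip A B + ip B B := by
  unfold ip
  have h1 : ∀ i j, (A - B) i j * (A - B) i j
      = A i j * A i j - 2 * (A i j * B i j) + B i j * B i j := by
    intro i j
    simp only [Matrix.sub_apply]
    ring
  calc ∑ i, ∑ j, (A - B) i j * (A - B) i j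
      = ∑ i, ∑ j, (A i j * A i j - 2 * (A i j * B i j) + B i j * B i j) := by
        exact Finset.sum_congr rfl (fun i _ => Finset.sum_congr rfl (fun j _ => h1 i j))
    _ = _ := by
        simp only [Finset.sum_add_distrib, Finset.sum_sub_distrib, ← Finset.mul_sum]

lemma ip_sum_right {d r N : ℕ} (A : Matrix (Fin d) (Fin r) ℝ)
    (f : Fin N → Matrix (Fin d) (Fin r) ℝ) : ip A (∑ t, f t) = ∑ t, ip A (f t) := by
  unfold ip
  have h1 : ∀ (i : Fin d) (j : Fin r), A i j * (∑ t, f t) i j = ∑ t, A i j * f t i j := by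
    intro i j; rw [Matrix.sum_apply, Finset.mul_sum]
  calc ∑ i, ∑ j, A i j * (∑ t, f t) i j = ∑ i, ∑ j, ∑ t, A i j * f t i j :=
        Finset.sum_congr rfl (fun i _ => Finset.sum_congr rfl (fun j _ => h1 i j))
    _ = ∑ i, ∑ t, ∑ j, A i j * f t i j :=
        Finset.sum_congr rfl (fun i _ => Finset.sum_comm)
    _ = ∑ t, ∑ i, ∑ j, A i j * f t i j := Finset.sum_comm

lemma ip_smul_right {d r : ℕ} (A B : Matrix (Fin d) (Fin r) ℝ) (c : ℝ) :
    ip A (c • B) = c * ip A B := by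
  unfold ip
  simp only [Matrix.smul_apply, smul_eq_mul, Finset.mul_sum]
  exact Finset.sum_congr rfl (fun i _ => Finset.sum_congr rfl (fun j _ => by ring))

lemma ip_self_stiefel {d r : ℕ} {x : Matrix (Fin d) (Fin r) ℝ} (hx : x ∈ Stiefel d r) :
    ip x x = r := by
  unfold ip
  rw [Finset.sum_comm]
  have : ∀ j : Fin r, ∑ i, x i j * x i j = 1 := by
    intro j
    rw [gram_eq hx j j, if_pos rfl]
  rw [Finset.sum_congr rfl (fun j _ => this j)]
  simp

lemma stiefel_vec_norm {d r : ℕ} {x : Matrix (Fin d) (Fin r) ℝ} (hx : x ∈ Stiefel d r)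
    (v : Fin r → ℝ) : ∑ i, (∑ a, x i a * v a) * (∑ a, x i a * v a) = ∑ a, v a * v a := by
  have h1 : ∀ i : Fin d, (∑ a, x i a * v a) * (∑ a, x i a * v a)
      = ∑ a, ∑ b, (v a * v b) * (x i a * x i b) := by
    intro i
    rw [Finset.sum_mul_sum]
    exact Finset.sum_congr rfl (fun a _ => Finset.sum_congr rfl (fun b _ => by ring))
  rw [Finset.sum_congr rfl (fun i _ => h1 i), Finset.sum_comm]
  have h2 : ∀ a : Fin r, ∑ i, ∑ b, (v a * v b) * (x i a * x i b) = v a * v a := by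
    intro a
    rw [Finset.sum_comm]
    have h3 : ∀ b : Fin r, ∑ i, (v a * v b) * (x i a * x i b)
        = (v a * v b) * (if a = b then (1:ℝ) else 0) := by
      intro b
      rw [← Finset.mul_sum, gram_eq hx a b]
    rw [Finset.sum_congr rfl (fun b _ => h3 b)]
    simp [Finset.sum_ite_eq]
  exact Finset.sum_congr rfl (fun a _ => h2 a)

end Aux

set_option maxHeartbeats 2000000 in
theorem stmt2 {N d r : ℕ} (hN : 0 < N)
    (x : Fin N → Matrix (Fin d) (Fin r) ℝ) (hx : ∀ i, x i ∈ Stiefel d r)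
    (xhat : Matrix (Fin d) (Fin r) ℝ) (hxhat : xhat = ((N : ℝ))⁻¹ • ∑ i, x i)
    (xbar : Matrix (Fin d) (Fin r) ℝ) (hmem : xbar ∈ Stiefel d r)
    (hmax : ∀ y ∈ Stiefel d r, ip y (∑ i, x i) ≤ ip xbar (∑ i, x i))
    (hsum : ∑ i, fnorm (x i - xbar) ^ 2 ≤ (N : ℝ) / 2) :
    ∑ i, fnorm (x i - xhat) ^ 2 ≥
      (∑ i, fnorm (x i - xbar) ^ 2) -
        (4 * (r : ℝ) / (N : ℝ)) * (∑ i, fnorm (x i - xbar) ^ 2) ^ 2 := by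
  rcases Nat.eq_zero_or_pos r with hr0 | hrpos
  · subst hr0
    simp [fnorm]
  have hr1 : (1:ℝ) ≤ r := by exact_mod_cast hrpos
  have hNpos : (0:ℝ) < N := by exact_mod_cast hN
  set S : Matrix (Fin d) (Fin r) ℝ := ∑ i, x i with hS
  set M : Fin r → Fin r → ℝ := fun a b => ∑ i, xbar i a * S i b with hM
  set t : ℝ := ∑ a, M a a with ht
  set D2 : ℝ := ∑ i, fnorm (x i - xbar) ^ 2 with hD2def
  -- basic: ip xbar S = t
  have hipxbarS : ip xbar S = t := by
    rw [ht]
    simp only [hM]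
    unfold ip
    exact Finset.sum_comm
  -- D2 = 2 N r - 2 t
  have hD2 : D2 = 2 * N * r - 2 * t := by
    rw [hD2def]
    have h1 : ∀ i : Fin N, fnorm (x i - xbar) ^ 2 = (r:ℝ) - 2 * ip (x i) xbar + r := by
      intro i
      rw [fnorm_sq, ip_sub_expand, ip_self_stiefel (hx i), ip_self_stiefel hmem]
    rw [Finset.sum_congr rfl (fun i _ => h1 i)]
    have h2 : ∑ i, ip (x i) xbar = t := by
      rw [← hipxbarS]
      calc ∑ i, ip (x i) xbar = ∑ i, ip xbar (x i) :=
            Finset.sum_congr rfl (fun i _ => ip_symm _ _)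
        _ = ip xbar (∑ i, x i) := (ip_sum_right _ _).symm
        _ = ip xbar S := by rw [← hS]
    simp only [Finset.sum_add_distrib, Finset.sum_sub_distrib, ← Finset.mul_sum, h2]
    simp
    ring
  -- LHS = N r - ip S S / N
  have hLHS : ∑ i, fnorm (x i - xhat) ^ 2 = N * r - ip S S / N := by
    have h1 : ∀ i : Fin N, fnorm (x i - xhat) ^ 2
        = (r:ℝ) - 2 * ((N:ℝ)⁻¹ * ip (x i) S) + (N:ℝ)⁻¹ * ((N:ℝ)⁻¹ * ip S S) := by
      intro i
      rw [fnorm_sq, ip_sub_expand, ip_self_stiefel (hx i), hxhat]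
      rw [ip_smul_right, ip_smul_right, ip_symm (((N:ℝ))⁻¹ • S) S, ip_smul_right, ip_symm S]
    rw [Finset.sum_congr rfl (fun i _ => h1 i)]
    have h2 : ∑ i, ip (x i) S = ip S S := by
      calc ∑ i, ip (x i) S = ∑ i, ip S (x i) :=
            Finset.sum_congr rfl (fun i _ => ip_symm _ _)
        _ = ip S (∑ i, x i) := (ip_sum_right _ _).symm
        _ = ip S S := by rw [← hS]
    simp only [Finset.sum_add_distrib, Finset.sum_sub_distrib, ← Finset.mul_sum, h2]
    simp only [Finset.sum_const, Finset.card_univ, Fintype.card_fin, nsmul_eq_mul]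
    field_simp
    ring
  -- ip S S = ∑ M^2
  have hP : ip S S = ∑ j, ∑ k, M k j * M k j := by
    have hcol : ∀ i j, S i j = ∑ k, xbar i k * M k j := by
      intro i j
      exact key_colspace hmem hmax i j
    unfold ip
    have h1 : ∀ (i : Fin d) (j : Fin r), S i j * S i j = ∑ k, M k j * (xbar i k * S i j) := by
      intro i j
      nth_rewrite 1 [hcol i j]
      rw [Finset.sum_mul]
      exact Finset.sum_congr rfl (fun k _ => by ring)
    rw [Finset.sum_congr rfl (fun i (_ : i ∈ univ) =>
      Finset.sum_congr rfl (fun j _ => h1 i j)), Finset.sum_comm]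
    apply Finset.sum_congr rfl
    intro j _
    rw [Finset.sum_comm]
    apply Finset.sum_congr rfl
    intro k _
    rw [← Finset.mul_sum]
  -- symmetry of M
  have hMsym : ∀ a b, M a b = M b a := by
    intro a b
    simp only [hM]
    exact key_sym hmem hmax a b
  -- quadratic form bound
  have hquad : ∀ v : Fin r → ℝ, ∑ a, ∑ b, v a * M a b * v b ≤ N * ∑ a, v a * v a := by
    intro v
    have h1 : ∑ a, ∑ b, v a * M a b * v b
        = ∑ i, (∑ a, xbar i a * v a) * (∑ b, S i b * v b) := by
      have e1 : ∀ a b, v a * M a b * v b = ∑ i, (xbar i a * v a) * (S i b * v b) := by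
        intro a b
        simp only [hM]
        rw [Finset.mul_sum, Finset.sum_mul]
        exact Finset.sum_congr rfl (fun i _ => by ring)
      calc ∑ a, ∑ b, v a * M a b * v b
          = ∑ a, ∑ b, ∑ i, (xbar i a * v a) * (S i b * v b) := by
            exact Finset.sum_congr rfl (fun a _ => Finset.sum_congr rfl (fun b _ => e1 a b))
        _ = ∑ a, ∑ i, ∑ b, (xbar i a * v a) * (S i b * v b) :=
            Finset.sum_congr rfl (fun a _ => Finset.sum_comm)
        _ = ∑ i, ∑ a, ∑ b, (xbar i a * v a) * (S i b * v b) := Finset.sum_comm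
        _ = ∑ i, (∑ a, xbar i a * v a) * (∑ b, S i b * v b) := by
            apply Finset.sum_congr rfl
            intro i _
            rw [Finset.sum_mul_sum]
    rw [h1]
    have h2 : ∀ i, (∑ b, S i b * v b) = ∑ τ : Fin N, ∑ b, x τ i b * v b := by
      intro i
      rw [Finset.sum_comm]
      apply Finset.sum_congr rfl
      intro b _
      rw [hS, Matrix.sum_apply, Finset.sum_mul]
    have h3 : ∑ i, (∑ a, xbar i a * v a) * (∑ b, S i b * v b)
        = ∑ τ : Fin N, ∑ i, (∑ a, xbar i a * v a) * (∑ b, x τ i b * v b) := by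
      rw [Finset.sum_comm]
      apply Finset.sum_congr rfl
      intro i _
      rw [h2 i, Finset.mul_sum]
    rw [h3]
    have h4 : ∀ τ : Fin N, ∑ i, (∑ a, xbar i a * v a) * (∑ b, x τ i b * v b)
        ≤ ∑ a, v a * v a := by
      intro τ
      set p : Fin d → ℝ := fun i => ∑ a, xbar i a * v a
      set q : Fin d → ℝ := fun i => ∑ b, x τ i b * v b
      have hcs := Finset.sum_mul_sq_le_sq_mul_sq univ p q
      have hp : ∑ i, p i ^ 2 = ∑ a, v a * v a := by
        have := stiefel_vec_norm hmem v
        rw [← this]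
        exact Finset.sum_congr rfl (fun i _ => by rw [pow_two])
      have hq : ∑ i, q i ^ 2 = ∑ a, v a * v a := by
        have := stiefel_vec_norm (hx τ) v
        rw [← this]
        exact Finset.sum_congr rfl (fun i _ => by rw [pow_two])
      rw [hp, hq] at hcs
      have hvn : (0:ℝ) ≤ ∑ a, v a * v a :=
        Finset.sum_nonneg (fun a _ => mul_self_nonneg (v a))
      nlinarith [hcs]
    calc ∑ τ : Fin N, ∑ i, (∑ a, xbar i a * v a) * (∑ b, x τ i b * v b)
        ≤ ∑ τ : Fin N, ∑ a, v a * v a := Finset.sum_le_sum (fun τ _ => h4 τ)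
      _ = N * ∑ a, v a * v a := by
          simp [Finset.sum_const, Finset.card_univ, nsmul_eq_mul]
  -- matrix A
  set A : Fin r → Fin r → ℝ := fun a b => (if a = b then (N:ℝ) else 0) - M a b with hA
  have hAquad : ∀ v : Fin r → ℝ, 0 ≤ ∑ a, ∑ b, v a * A a b * v b := by
    intro v
    have h1 : ∑ a, ∑ b, v a * A a b * v b
        = N * (∑ a, v a * v a) - ∑ a, ∑ b, v a * M a b * v b := by
      have e1 : ∀ a b, v a * A a b * v b
          = (if a = b then (N:ℝ) * (v a * v b) else 0) - v a * M a b * v b := by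
        intro a b
        simp only [hA]
        by_cases h : a = b
        · rw [if_pos h, if_pos h]; ring
        · rw [if_neg h, if_neg h]; ring
      rw [Finset.sum_congr rfl (fun a (_ : a ∈ univ) =>
        Finset.sum_congr rfl (fun b _ => e1 a b))]
      simp only [Finset.sum_sub_distrib]
      congr 1
      have : ∀ a : Fin r, ∑ b, (if a = b then (N:ℝ) * (v a * v b) else 0)
          = N * (v a * v a) := by
        intro a
        simp [Finset.sum_ite_eq]
      rw [Finset.sum_congr rfl (fun a _ => this a), ← Finset.mul_sum]
    rw [h1]
    linarith [hquad v]
  have hAsym : ∀ a b, A a b = A b a := by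
    intro a b
    simp only [hA]
    rw [hMsym a b]
    by_cases h : a = b
    · rw [if_pos h, if_pos h.symm]
    · rw [if_neg h, if_neg (Ne.symm h)]
  have hA2 : ∀ a b, A a b ^ 2 ≤ A a a * A b b := by
    intro a b
    by_cases hab : a = b
    · rw [hab, pow_two]
    · have hquad2 : ∀ s : ℝ, 0 ≤ A a a * (s * s) + (2 * A a b) * s + A b b := by
        intro s
        set v : Fin r → ℝ := fun p => if p = a then s else if p = b then 1 else 0 with hv
        have := hAquad v
        have hcomp : ∑ p, ∑ q, v p * A p q * v q
            = A a a * (s * s) + (2 * A a b) * s + A b b := by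
          have einner : ∀ p : Fin r, ∑ q, v p * A p q * v q
              = v p * (s * A p a + 1 * A p b) := by
            intro p
            have : ∀ q : Fin r, v p * A p q * v q = v q * (v p * A p q) := fun q => by ring
            rw [Finset.sum_congr rfl (fun q _ => this q), hv]
            rw [sum_two_point hab (fun q => v p * A p q) s 1]
            ring
          rw [Finset.sum_congr rfl (fun p _ => einner p), hv,
            sum_two_point hab (fun p => s * A p a + 1 * A p b) s 1]
          rw [hAsym a b]
          ring
        rw [hcomp] at this
        exact this
      have hd := discrim_le_zero hquad2
      rw [discrim] at hd
      nlinarith [hd]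
  have htrA : ∑ a, A a a = N * r - t := by
    rw [ht]
    have : ∀ a : Fin r, A a a = (N:ℝ) - M a a := by
      intro a; simp only [hA]; simp
    rw [Finset.sum_congr rfl (fun a _ => this a), Finset.sum_sub_distrib]
    simp [Finset.card_univ]
    ring
  have hAbound : ∑ a, ∑ b, A a b ^ 2 ≤ (N * r - t) ^ 2 := by
    calc ∑ a, ∑ b, A a b ^ 2 ≤ ∑ a, ∑ b, A a a * A b b :=
          Finset.sum_le_sum (fun a _ => Finset.sum_le_sum (fun b _ => hA2 a b))
      _ = (∑ a, A a a) * (∑ b, A b b) := by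
          rw [Finset.sum_mul_sum]
      _ = (N * r - t) ^ 2 := by rw [htrA, pow_two]
  have hexp : ∑ a, ∑ b, A a b ^ 2 = (N:ℝ)^2 * r - 2 * N * t + ∑ j, ∑ k, M k j * M k j := by
    have e1 : ∀ a b, A a b ^ 2
        = (if a = b then (N:ℝ)^2 - 2*N*M a b else 0) + M a b * M a b := by
      intro a b
      simp only [hA]
      by_cases h : a = b
      · rw [if_pos h, if_pos h]; ring
      · rw [if_neg h, if_neg h]; ring
    rw [Finset.sum_congr rfl (fun a (_ : a ∈ univ) =>
      Finset.sum_congr rfl (fun b _ => e1 a b))]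
    simp only [Finset.sum_add_distrib]
    have e2 : ∑ a, ∑ b, (if a = b then (N:ℝ)^2 - 2*N*M a b else 0)
        = (N:ℝ)^2 * r - 2 * N * t := by
      have : ∀ a : Fin r, ∑ b, (if a = b then (N:ℝ)^2 - 2*N*M a b else 0)
          = (N:ℝ)^2 - 2*N*M a a := by
        intro a
        simp [Finset.sum_ite_eq]
      rw [Finset.sum_congr rfl (fun a _ => this a), Finset.sum_sub_distrib, ht]
      simp only [Finset.sum_const, Finset.card_univ, Fintype.card_fin, nsmul_eq_mul]
      rw [← Finset.mul_sum]
      ring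
    rw [e2]
    have e3 : ∑ a, ∑ b, M a b * M a b = ∑ j, ∑ k, M k j * M k j := Finset.sum_comm
    rw [e3]
  -- final bound on ip S S
  have hPbound : ip S S ≤ (N * r - t)^2 + 2*N*t - (N:ℝ)^2*r := by
    rw [hP]
    nlinarith [hAbound, hexp]
  -- conclude
  rw [ge_iff_le, hLHS]
  have hteq : t = N * r - D2 / 2 := by linarith [hD2]
  have hPb2 : ip S S ≤ D2^2/4 + (N:ℝ)^2*r - N*D2 := by
    rw [hteq] at hPbound
    nlinarith [hPbound]
  have e1 : (N:ℝ)*r - ip S S/N = ((N:ℝ)*N*r - ip S S)/N := by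
    field_simp
  have e2 : D2 - 4*(r:ℝ)/N*D2^2 = ((N:ℝ)*D2 - 4*r*D2^2)/N := by
    field_simp
  rw [e1, e2, div_le_div_iff_of_pos_right hNpos]
  nlinarith [hPb2, sq_nonneg D2, hr1, hNpos]
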